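/- Let a, b, c be three distinct vertices in a graph G. Then G contains a path that starts at a, passes through b, and ends at c if and only if no single vertex other than b separates b from {a, c} (i.e., for every vertex v ≠ b, there is a path from b to a or from b to c in G − v). -/

import Mathlib

set_option linter.unusedSectionVars false

open List

namespace AbcPathAux

/-! ### Generic list helpers -/

section ListHelpers
variable {α : Type*} [DecidableEq α]

theorem mem_take_iff_indexOf {l : List α} {y : α} {k : ℕ} :
    y ∈ l.take k ↔ y ∈ l ∧ l.idxOf y < k := by
  constructor
  · intro h
    have hm : y ∈ l := l.take_subset k h
    have h1 : l.idxOf y = (l.take k).idxOf y := by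
      conv_lhs => rw [← l.take_append_drop k]
      exact idxOf_append_of_mem h
    have h2 : (l.take k).idxOf y < (l.take k).length := idxOf_lt_length_iff.2 h
    have h3 : (l.take k).length ≤ k := by simp [length_take]
    exact ⟨hm, h1 ▸ lt_of_lt_of_le h2 h3⟩
  · rintro ⟨hm, hk⟩
    have hlt : l.idxOf y < l.length := idxOf_lt_length_iff.2 hm
    have : (l.take k)[l.idxOf y]'(by simp [length_take]; omega) = y := by
      rw [getElem_take]; exact getElem_idxOf hlt
    exact this ▸ getElem_mem _

theorem mem_drop_iff_indexOf {l : List α} (hl : l.Nodup) {y : α} {k : ℕ} :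
    y ∈ l.drop k ↔ y ∈ l ∧ k ≤ l.idxOf y := by
  have hsplit := l.take_append_drop k
  constructor
  · intro h
    have hm : y ∈ l := l.drop_subset k h
    refine ⟨hm, ?_⟩
    by_contra hlt
    push_neg at hlt
    have hyt : y ∈ l.take k := mem_take_iff_indexOf.2 ⟨hm, hlt⟩
    have : l.Nodup := hl
    rw [← hsplit] at this
    exact (List.disjoint_of_nodup_append this) hyt h
  · rintro ⟨hm, hk⟩
    rw [← hsplit] at hm
    rcases mem_append.1 hm with h | h
    · exact absurd (mem_take_iff_indexOf.1 h).2 (by omega)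
    · exact h

theorem indexOf_drop {l : List α} (hl : l.Nodup) {y : α} {k : ℕ}
    (hm : y ∈ l) (hk : k ≤ l.idxOf y) :
    (l.drop k).idxOf y = l.idxOf y - k := by
  have hlt : l.idxOf y < l.length := idxOf_lt_length_iff.2 hm
  have h1 : (l.drop k)[l.idxOf y - k]'(by rw [length_drop]; omega) = y := by
    rw [getElem_drop]
    have : k + (l.idxOf y - k) = l.idxOf y := by omega
    simp_rw [this]
    exact getElem_idxOf hlt
  have h2 := List.Nodup.idxOf_getElem (hl.sublist (l.drop_sublist k))
    (l.idxOf y - k) (by rw [length_drop]; omega)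
  rw [h1] at h2
  exact h2

end ListHelpers

section ChainHelpers
variable {α : Type*}

theorem chain_cons' {r : α → α → Prop} {a b : α} {l : List α} :
    Chain r a (b :: l) ↔ r a b ∧ Chain r b l := isChain_cons_cons

theorem chain_split' {r : α → α → Prop} {a b : α} {l₁ l₂ : List α} :
    Chain r a (l₁ ++ b :: l₂) ↔ Chain r a (l₁ ++ [b]) ∧ Chain r b l₂ := isChain_cons_split


theorem chain_append_of_getLast {r : α → α → Prop} :
    ∀ (p : List α) (x y : α) (q : List α), Chain r x p →
      (x :: p).getLast (by simp) = y → Chain r y q → Chain r x (p ++ q)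
  | [], x, y, q, _, hy, hq => by
    simp only [getLast_singleton] at hy
    subst hy; exact hq
  | z :: p, x, y, q, hp, hy, hq => by
    rw [chain_cons'] at hp
    rw [List.cons_append, chain_cons']
    refine ⟨hp.1, chain_append_of_getLast p z y q hp.2 ?_ hq⟩
    rw [← hy, List.getLast_cons_cons]

theorem getLast_cons_append (x : α) (p q : List α) (hq : q ≠ []) :
    (x :: (p ++ q)).getLast (by simp) = q.getLast hq := by
  exact getLast_append_of_ne_nil (l := x :: p) (by simp) hq

/-- getLast of a composite through the getLast of the first part. -/
theorem getLast_cons_append_eq (x y : α) (p q : List α)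
    (h : (x :: p).getLast (by simp) = y) :
    (x :: (p ++ q)).getLast (by simp) = (y :: q).getLast (by simp) := by
  cases q with
  | nil => simpa using h
  | cons w q' =>
    rw [getLast_cons_append x p (w :: q') (by simp)]
    rw [List.getLast_cons_cons]

theorem exists_chain_of_rtg {r : α → α → Prop} {x y : α}
    (h : Relation.ReflTransGen r x y) :
    ∃ L, Chain r x L ∧ (x :: L).getLast (by simp) = y := by
  induction h with
  | refl => exact ⟨[], Chain.nil, rfl⟩
  | tail _ hstep ih =>
    obtain ⟨L, hL, hlast⟩ := ih
    rename_i z w _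
    refine ⟨L ++ [w], ?_, ?_⟩
    · exact chain_append_of_getLast L x z [w] hL hlast (Chain.cons hstep Chain.nil)
    · exact getLast_concat (l := x :: L)

theorem chain_concat_split {r : α → α → Prop} :
    ∀ (p : List α) (x y : α), Chain r x (p ++ [y]) →
      Chain r x p ∧ r ((x :: p).getLast (by simp)) y
  | [], x, y, h => by
    rw [nil_append, chain_cons'] at h
    exact ⟨Chain.nil, h.1⟩
  | z :: p, x, y, h => by
    rw [cons_append, chain_cons'] at h
    obtain ⟨h1, h2⟩ := chain_concat_split p z y h.2
    exact ⟨Chain.cons h.1 h1, by rwa [List.getLast_cons_cons]⟩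

end ChainHelpers

/-! ### Walk helpers -/

section WalkHelpers
variable {V : Type*} {G : SimpleGraph V}

theorem walk_support_getLast {u v : V} (p : G.Walk u v) :
    p.support.getLast (by simp) = v := by
  induction p with
  | nil => rfl
  | cons h p ih =>
    exact (List.getLast_cons (by simp)).trans ih

theorem exists_walk_of_adj_chain :
    ∀ (L : List V) (x y : V), Chain G.Adj x L → (x :: L).getLast (by simp) = y →
      ∃ w : G.Walk x y, w.support = x :: L
  | [], x, y, _, hy => by
    simp only [getLast_singleton] at hy; subst hy
    exact ⟨SimpleGraph.Walk.nil, rfl⟩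
  | z :: L, x, y, h, hy => by
    rw [chain_cons'] at h
    obtain ⟨w, hw⟩ := exists_walk_of_adj_chain L z y h.2
      (by rw [← hy, List.getLast_cons_cons])
    exact ⟨SimpleGraph.Walk.cons h.1 w, by simp [hw]⟩

theorem chain'_adj_getElem {l : List V} (hc : List.Chain' G.Adj l)
    {t : ℕ} (ht : t + 1 < l.length) :
    G.Adj (l[t]'(by omega)) (l[t+1]'ht) := by
  replace hc : List.IsChain G.Adj l := hc
  rw [List.isChain_iff_getElem] at hc
  simpa using hc t (by omega)

theorem runup {l : List V} (hc : List.Chain' G.Adj l) :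
    ∀ (d i j : ℕ) (hij : i + d = j) (hj : j < l.length),
      ∃ R : List V, Chain G.Adj (l[i]'(by omega)) R ∧
        (l[i]'(by omega) :: R).getLast (by simp) = l[j]'hj ∧
        ∀ x ∈ R, ∃ (t : ℕ) (ht : t < l.length), i < t ∧ t ≤ j ∧ x = l[t]'ht := by
  intro d
  induction d with
  | zero =>
    intro i j hij hj
    subst hij
    exact ⟨[], Chain.nil, by simp, by simp⟩
  | succ d ih =>
    intro i j hij hj
    obtain ⟨R, hR, hlast, hmem⟩ := ih i (i + d) rfl (by omega)
    refine ⟨R ++ [l[j]'hj], ?_, by exact getLast_concat (l := l[i]'(by omega) :: R), ?_⟩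
    · refine chain_append_of_getLast R _ _ [l[j]'hj] hR hlast ?_
      refine Chain.cons ?_ Chain.nil
      have : i + d + 1 = j := by omega
      subst this
      exact chain'_adj_getElem hc (by omega)
    · intro x hx
      rcases mem_append.1 hx with h | h
      · obtain ⟨t, ht, h1, h2, h3⟩ := hmem x h
        exact ⟨t, ht, h1, by omega, h3⟩
      · simp only [List.mem_singleton] at h
        exact ⟨j, hj, by omega, le_refl j, h⟩

theorem rundown {l : List V} (hc : List.Chain' G.Adj l) :
    ∀ (d i j : ℕ) (hij : i + d = j) (hj : j < l.length),
      ∃ R : List V, Chain G.Adj (l[j]'hj) R ∧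
        (l[j]'hj :: R).getLast (by simp) = l[i]'(by omega) ∧
        ∀ x ∈ R, ∃ (t : ℕ) (ht : t < l.length), i ≤ t ∧ t < j ∧ x = l[t]'ht := by
  intro d
  induction d with
  | zero =>
    intro i j hij hj
    subst hij
    exact ⟨[], Chain.nil, by simp, by simp⟩
  | succ d ih =>
    intro i j hij hj
    obtain ⟨R, hR, hlast, hmem⟩ := ih (i+1) j (by omega) hj
    have hi : i < l.length := by omega
    refine ⟨R ++ [l[i]'hi], ?_, by exact getLast_concat (l := l[j]'hj :: R), ?_⟩
    · refine chain_append_of_getLast R _ _ [l[i]'hi] hR hlast ?_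
      refine Chain.cons ?_ Chain.nil
      exact (chain'_adj_getElem hc (t := i) (by omega)).symm
    · intro x hx
      rcases mem_append.1 hx with h | h
      · obtain ⟨t, ht, h1, h2, h3⟩ := hmem x h
        exact ⟨t, ht, by omega, h2, h3⟩
      · simp only [List.mem_singleton] at h
        exact ⟨i, hi, le_refl i, by omega, h⟩

end WalkHelpers

/-! ### The residual step relation and certificates -/

section Core
variable {V : Type*} [DecidableEq V]

/-- Residual step relation relative to the support list `l` of a fixed `b`–`c` path.
A step either moves freely to a vertex off `l`, or "jumps" onto `l`, landing at any
vertex of `l` strictly before a neighbour of the current vertex. -/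
def Step (G : SimpleGraph V) (l : List V) (x y : V) : Prop :=
  (G.Adj x y ∧ y ∉ l) ∨ (y ∈ l ∧ ∃ z ∈ l, G.Adj x z ∧ l.idxOf y < l.idxOf z)

variable {G : SimpleGraph V}

theorem adj_chain_of_step_chain {l : List V} :
    ∀ (L : List V) (x : V), Chain (Step G l) x L → (∀ y ∈ L, y ∉ l) → Chain G.Adj x L
  | [], _, _, _ => Chain.nil
  | y :: L, x, h, hmem => by
    rw [chain_cons'] at h ⊢
    rcases h.1 with ⟨hadj, _⟩ | ⟨hyl, _⟩
    · exact ⟨hadj, adj_chain_of_step_chain L y h.2 fun z hz => hmem z (mem_cons_of_mem _ hz)⟩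
    · exact absurd hyl (hmem y (mem_cons_self))

theorem step_chain_of_adj_chain {l : List V} :
    ∀ (L : List V) (x : V), Chain G.Adj x L → (∀ y ∈ L, y ∉ l) → Chain (Step G l) x L
  | [], _, _, _ => Chain.nil
  | y :: L, x, h, hmem => by
    rw [chain_cons'] at h ⊢
    exact ⟨Or.inl ⟨h.1, hmem y (mem_cons_self)⟩,
      step_chain_of_adj_chain L y h.2 fun z hz => hmem z (mem_cons_of_mem _ hz)⟩

/-- number of vertices of `L` lying on `l` -/
noncomputable def cnt (l L : List V) : ℕ := L.countP (fun y => decide (y ∈ l))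

theorem cnt_nil (l : List V) : cnt l [] = 0 := rfl

theorem cnt_cons_mem {l : List V} {y : V} (h : y ∈ l) (L : List V) :
    cnt l (y :: L) = cnt l L + 1 := by simp [cnt, countP_cons, h]

theorem cnt_cons_not_mem {l : List V} {y : V} (h : y ∉ l) (L : List V) :
    cnt l (y :: L) = cnt l L := by simp [cnt, countP_cons, h]

theorem cnt_append (l L₁ L₂ : List V) : cnt l (L₁ ++ L₂) = cnt l L₁ + cnt l L₂ := by
  simp [cnt, countP_append]

theorem cnt_le_cons (l : List V) (y : V) (L : List V) : cnt l L ≤ cnt l (y :: L) := by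
  by_cases h : y ∈ l
  · rw [cnt_cons_mem h]; omega
  · rw [cnt_cons_not_mem h]

theorem cnt_eq_zero {l L : List V} : cnt l L = 0 ↔ ∀ y ∈ L, y ∉ l := by
  simp [cnt, countP_eq_zero]

theorem cnt_eq_zero_of {l L : List V} (h : ∀ y ∈ L, y ∉ l) : cnt l L = 0 :=
  cnt_eq_zero.2 h

/-! ### The separator argument -/

theorem exists_cert_aux {a b c : V} (hab : a ≠ b) (hbc : b ≠ c)
    (hyp : ∀ v : V, v ≠ b →
      (∃ p : G.Walk b a, p.IsPath ∧ v ∉ p.support) ∨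
      (∃ p : G.Walk b c, p.IsPath ∧ v ∉ p.support))
    (α : G.Walk b c) (hα : α.IsPath) (ha : a ∉ α.support) :
    ∃ u, Relation.ReflTransGen (Step G α.support) b u ∧ G.Adj u a := by
  by_contra hcon
  push_neg at hcon
  set l := α.support with hldef
  have hnd : l.Nodup := hα.support_nodup
  have hbl : b ∈ l := α.start_mem_support
  have hcl : c ∈ l := α.end_mem_support
  have hRb : Relation.ReflTransGen (Step G l) b b := Relation.ReflTransGen.refl
  have hRa : ¬ Relation.ReflTransGen (Step G l) b a := by
    intro h
    rcases h.cases_tail with h' | ⟨u, hu, hstep⟩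
    · exact hab h'
    · rcases hstep with ⟨hadj, _⟩ | ⟨hmem, _⟩
      · exact hcon u hu hadj
      · exact ha hmem
  have hRc : ¬ Relation.ReflTransGen (Step G l) b c := by
    intro h
    rcases h.cases_tail with h' | ⟨u, hu, hstep⟩
    · exact hbc h'.symm
    · rcases hstep with ⟨_, hcl'⟩ | ⟨_, z, hzl, _, hlt⟩
      · exact hcl' hcl
      · have hlen : 0 < l.length := length_pos_iff.2 (List.ne_nil_of_mem hbl)
        have hc_idx : l.idxOf c = l.length - 1 := by
          have h1 : l.getLast (by simp [hldef]) = c := walk_support_getLast α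
          have h2 : l.getLast (by simp [hldef]) = l[l.length - 1]'(by omega) :=
            getLast_eq_getElem _
          have h3 := List.Nodup.idxOf_getElem hnd (l.length - 1) (by omega)
          rw [h2] at h1
          rw [h1] at h3
          exact h3
        have := idxOf_lt_length_iff.2 hzl
        omega
  -- a path from b to a
  have hPa : ∃ P : G.Walk b a, True := by
    rcases hyp c hbc.symm with ⟨P, _, _⟩ | ⟨P, _, hcP⟩
    · exact ⟨P, trivial⟩
    · exact absurd P.end_mem_support hcP
  obtain ⟨Pa, -⟩ := hPa
  have KW1 : ∀ {x y : V} (P : G.Walk x y),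
      Relation.ReflTransGen (Step G l) b x → ¬ Relation.ReflTransGen (Step G l) b y →
      ∃ w, w ∈ l ∧ ¬ Relation.ReflTransGen (Step G l) b w ∧
        ∀ z ∈ l, l.idxOf z < l.idxOf w → Relation.ReflTransGen (Step G l) b z := by
    intro x y P
    induction P with
    | nil => intro hx hy; exact absurd hx hy
    | cons hadj P ih =>
      rename_i x x' y
      intro hx hy
      by_cases hx' : Relation.ReflTransGen (Step G l) b x'
      · exact ih hx' hy
      · by_cases hmem : x' ∈ l
        · exact ⟨x', hmem, hx',
            fun z hz hlt => hx.tail (Or.inr ⟨hz, x', hmem, hadj, hlt⟩)⟩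
        · exact absurd (hx.tail (Or.inl ⟨hadj, hmem⟩)) hx'
  obtain ⟨w, hwl, hwR, hlow⟩ := KW1 Pa hRb hRa
  have hwb : w ≠ b := fun h => hwR (h ▸ hRb)
  have KW2 : ∀ {x y : V} (P : G.Walk x y),
      Relation.ReflTransGen (Step G l) b x → w ∉ P.support →
      Relation.ReflTransGen (Step G l) b y := by
    intro x y P
    induction P with
    | nil => intro hx _; exact hx
    | cons hadj P ih =>
      rename_i x x' y
      intro hx hw
      rw [SimpleGraph.Walk.support_cons] at hw
      have hw' : w ∉ P.support := fun h => hw (mem_cons_of_mem _ h)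
      have hx'R : Relation.ReflTransGen (Step G l) b x' := by
        by_cases hmem : x' ∈ l
        · rcases Nat.lt_trichotomy (l.idxOf x') (l.idxOf w) with h | h | h
          · exact hlow x' hmem h
          · have : x' = w := (idxOf_inj hmem).1 h
            exact absurd (this ▸ P.start_mem_support) hw'
          · exact (hwR (hx.tail (Or.inr ⟨hwl, x', hmem, hadj, h⟩))).elim
        · exact hx.tail (Or.inl ⟨hadj, hmem⟩)
      exact ih hx'R hw'
  rcases hyp w hwb with ⟨Q, _, hwQ⟩ | ⟨Q, _, hwQ⟩
  · exact hRa (KW2 Q hRb hwQ)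
  · exact hRc (KW2 Q hRb hwQ)

/-! ### Extraction of the final path from a jump-free certificate -/

theorem extract {a b c : V} (hab : a ≠ b) (α : G.Walk b c) (hα : α.IsPath)
    (ha : a ∉ α.support) (L : List V) (hch : Chain (Step G α.support) b L)
    (hadj : G.Adj ((b :: L).getLast (by simp)) a) (h0 : ∀ y ∈ L, y ∉ α.support) :
    ∃ p : G.Walk a c, p.IsPath ∧ b ∈ p.support := by
  have hAdjL : Chain G.Adj b L := adj_chain_of_step_chain L b hch h0
  have hch2 : Chain G.Adj b (L ++ [a]) :=
    chain_append_of_getLast L b _ [a] hAdjL rfl (Chain.cons hadj Chain.nil)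
  obtain ⟨W, hWs⟩ := exists_walk_of_adj_chain (L ++ [a]) b a hch2
    (getLast_concat (l := b :: L))
  have hβp : W.bypass.IsPath := W.bypass_isPath
  have hβsub : W.bypass.support ⊆ b :: (L ++ [a]) := hWs ▸ W.support_bypass_subset
  have htl : α.support = b :: α.support.tail := α.support_eq_cons
  refine ⟨W.bypass.reverse.append α, ?_, ?_⟩
  · rw [SimpleGraph.Walk.isPath_def, SimpleGraph.Walk.support_append, List.nodup_append]
    refine ⟨hβp.reverse.support_nodup, ?_, ?_⟩
    · have := hα.support_nodup
      rw [htl] at this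
      exact this.of_cons
    · intro x hx y hx' hxy
      subst hxy
      have hxβ : x ∈ W.bypass.support := by
        rw [SimpleGraph.Walk.support_reverse] at hx
        exact (List.mem_reverse).1 hx
      have hxα : x ∈ α.support := by rw [htl]; exact mem_cons_of_mem _ hx'
      have hxb : x ≠ b := by
        intro h
        have := hα.support_nodup
        rw [htl, nodup_cons] at this
        exact this.1 (h ▸ hx')
      rcases List.mem_cons.1 (hβsub hxβ) with h | h
      · exact hxb h
      · rcases mem_append.1 h with h | h
        · exact h0 x h hxα
        · simp only [List.mem_singleton] at h
          subst h
          exact ha hxα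
  · rw [SimpleGraph.Walk.mem_support_append_iff]
    exact Or.inl (SimpleGraph.Walk.end_mem_support _)

end Core

/-! ### helpers for surgery -/

theorem dropWhile_head_not {β : Type*} (p : β → Bool) :
    ∀ (L : List β) (y : β) (δ : List β), L.dropWhile p = y :: δ → ¬ p y = true
  | [], y, δ, h => by simp at h
  | z :: L, y, δ, h => by
    by_cases hz : p z
    · rw [dropWhile_cons_of_pos hz] at h
      exact dropWhile_head_not p L y δ h
    · rw [dropWhile_cons_of_neg hz] at h
      rw [cons.injEq] at h
      exact h.1 ▸ hz

theorem getLast_cons_eq_of_eq {β : Type*} {x x' : β} (h : x = x') (R : List β) :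
    (x :: R).getLast (by simp) = (x' :: R).getLast (by simp) := by subst h; rfl

section Surgery
variable {V : Type*} [DecidableEq V] {G : SimpleGraph V}

theorem surgery {a b c : V} (hab : a ≠ b)
    (α : G.Walk b c) (hα : α.IsPath) (ha : a ∉ α.support)
    (L : List V) (hch : Chain (Step G α.support) b L)
    (hadj_end : G.Adj ((b :: L).getLast (by simp)) a)
    (hpos : 0 < cnt α.support L) :
    ∃ (α' : G.Walk b c) (L' : List V), α'.IsPath ∧ a ∉ α'.support ∧
      Chain (Step G α'.support) b L' ∧
      G.Adj ((b :: L').getLast (by simp)) a ∧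
      cnt α'.support L' < cnt α.support L := by
  classical
  set l := α.support with hldef
  have hnd : l.Nodup := hα.support_nodup
  have hbl : b ∈ l := α.start_mem_support
  have hlc : List.Chain' G.Adj l := α.isChain_adj_support
  have hhead : l = b :: α.support.tail := α.support_eq_cons
  have hb0 : l.idxOf b = 0 := by rw [hhead]; exact idxOf_cons_self
  -- decompose L at the first jump
  set p : V → Bool := fun y => decide (y ∉ l) with hpdef
  set σ : List V := L.takeWhile p with hσdef
  set ρ : List V := L.dropWhile p with hρdef
  have hLσρ : L = σ ++ ρ := (takeWhile_append_dropWhile (p := p) (l := L)).symm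
  have hσ : ∀ s ∈ σ, s ∉ l := by
    intro s hs
    have := mem_takeWhile_imp hs
    rw [hpdef] at this
    simpa using this
  have hcntσ : cnt l σ = 0 := cnt_eq_zero_of hσ
  obtain ⟨y₀, δ, hρeq⟩ : ∃ y₀ δ, ρ = y₀ :: δ := by
    cases hρ : ρ with
    | nil =>
      rw [hρ, append_nil] at hLσρ
      rw [hLσρ, hcntσ] at hpos
      omega
    | cons y₀ δ => exact ⟨y₀, δ, rfl⟩
  have hy₀l : y₀ ∈ l := by
    have := dropWhile_head_not p L y₀ δ (hρdef ▸ hρeq)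
    rw [hpdef] at this
    simpa using this
  have hLform : L = σ ++ y₀ :: δ := by rw [hLσρ, hρeq]
  have hch' : Chain (Step G l) b (σ ++ y₀ :: δ) := hLform ▸ hch
  obtain ⟨hch1, hchδ⟩ := chain_split'.1 hch'
  obtain ⟨hchσ, hstep₀⟩ := chain_concat_split σ b y₀ hch1
  set u : V := (b :: σ).getLast (by simp) with hudef
  have hcntL : cnt l L = cnt l δ + 1 := by
    rw [hLform, cnt_append, hcntσ, cnt_cons_mem hy₀l]
    omega
  have hLlast : (b :: L).getLast (by simp) = (y₀ :: δ).getLast (by simp) := by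
    rw [hLform]
    exact (getLast_cons_append_eq b u σ (y₀ :: δ) rfl).trans List.getLast_cons_cons
  rcases hstep₀ with ⟨_, hy₀l'⟩ | ⟨_, r, hrl, hadj_ur, hlt₀⟩
  · exact absurd hy₀l hy₀l'
  -- the jump target r with index m
  set m : ℕ := l.idxOf r with hmdef
  have hmlen : m < l.length := idxOf_lt_length_iff.2 hrl
  have hm1 : 1 ≤ m := by
    have : l.idxOf y₀ < m := hlt₀
    omega
  have hrb : r ≠ b := by
    intro h
    rw [h, hb0] at hmdef
    omega
  by_cases haσ : a ∈ σ
  · -- short-circuit: a jump-free certificate, reuse α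
    obtain ⟨σ₁, σ₂, hsp⟩ := List.append_of_mem haσ
    rw [hsp] at hchσ
    obtain ⟨hchσ₁', _⟩ := chain_split'.1 hchσ
    obtain ⟨hchσ₁, hstep_a⟩ := chain_concat_split σ₁ b a hchσ₁'
    rcases hstep_a with ⟨hadj_a, _⟩ | ⟨hal, _⟩
    · refine ⟨α, σ₁, hα, ha, hchσ₁, hadj_a, ?_⟩
      have : cnt l σ₁ = 0 := cnt_eq_zero_of fun s hs =>
        hσ s (by rw [hsp]; exact mem_append_left _ hs)
      rw [this]
      omega
    · exact absurd hal ha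
  -- main surgery
  have hAdjσ : Chain G.Adj b σ := adj_chain_of_step_chain σ b hchσ hσ
  obtain ⟨WB, hWBs⟩ := exists_walk_of_adj_chain σ b u hAdjσ rfl
  set PB : G.Walk b u := WB.bypass with hPBdef
  have hPBp : PB.IsPath := WB.bypass_isPath
  have hPBsub : PB.support ⊆ b :: σ := hWBs ▸ WB.support_bypass_subset
  -- suffix walk S with support l.drop m
  set S : G.Walk r c := α.dropUntil r hrl with hSdef
  set T' : G.Walk b r := α.takeUntil r hrl with hTdef
  have htsp : T'.append S = α := α.take_spec hrl
  have hls : l = T'.support ++ S.support.tail := by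
    conv_lhs => rw [hldef, ← htsp]
    exact SimpleGraph.Walk.support_append _ _
  have hTnd : T'.support.Nodup := (hα.takeUntil hrl).support_nodup
  have hrT : r ∈ T'.support := T'.end_mem_support
  have hTlen : T'.support.length = m + 1 := by
    have h0 : 0 < T'.support.length := by
      rw [T'.support_eq_cons]; simp
    have h1 : l.idxOf r = T'.support.idxOf r := by
      rw [hls]; exact idxOf_append_of_mem hrT
    have h2 : T'.support.getLast (by simp) = r := walk_support_getLast T'
    have h3 : T'.support.getLast (by simp) =
        T'.support[T'.support.length - 1]'(by omega) := getLast_eq_getElem _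
    have h4 := List.Nodup.idxOf_getElem hTnd (T'.support.length - 1) (by omega)
    rw [h3] at h2
    rw [h2] at h4
    rw [hmdef, h1, h4]
    omega
  have hSsupt : S.support.tail = l.drop (m + 1) := by
    rw [hls, ← hTlen, drop_left]
  have hSs : S.support = l.drop m := by
    have h1 : S.support = r :: S.support.tail := S.support_eq_cons
    have h2 : l.drop m = l[m]'hmlen :: l.drop (m + 1) := List.drop_eq_getElem_cons hmlen
    have h3 : l[m]'hmlen = r := getElem_idxOf hmlen
    rw [h1, hSsupt, h2, h3]
  -- the new path α'
  set α' : G.Walk b c := PB.append (SimpleGraph.Walk.cons hadj_ur S) with hα'def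
  set l' : List V := α'.support with hl'def
  have hl' : l' = PB.support ++ l.drop m := by
    rw [hl'def, hα'def, SimpleGraph.Walk.support_append, SimpleGraph.Walk.support_cons,
      List.tail_cons, hSs]
  have hPBnd : PB.support.Nodup := hPBp.support_nodup
  have hdropnd : (l.drop m).Nodup := hnd.sublist (l.drop_sublist m)
  have hdisj : ∀ x ∈ PB.support, x ∉ l.drop m := by
    intro x hx hx'
    have hx2 := (mem_drop_iff_indexOf hnd).1 hx'
    rcases List.mem_cons.1 (hPBsub hx) with rfl | h
    · rw [hb0] at hx2; omega
    · exact hσ x h hx2.1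
  have hα'p : α'.IsPath := by
    rw [SimpleGraph.Walk.isPath_def, ← hl'def, hl', List.nodup_append]
    exact ⟨hPBnd, hdropnd, fun x hx y hy hxy => hdisj x hx (hxy ▸ hy)⟩
  have ha' : a ∉ l' := by
    rw [hl']
    intro h
    rcases mem_append.1 h with h | h
    · rcases List.mem_cons.1 (hPBsub h) with h' | h'
      · exact hab h'
      · exact haσ h'
    · exact ha (l.drop_subset m h)
  have hl'head : l' = b :: (PB.support.tail ++ l.drop m) := by
    rw [hl']
    conv_lhs => rw [PB.support_eq_cons]
    rfl
  have hb0' : l'.idxOf b = 0 := by rw [hl'head]; exact idxOf_cons_self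
  have hbl' : b ∈ l' := by rw [hl'head]; exact mem_cons_self
  have hl'nd : l'.Nodup := hα'p.support_nodup
  -- key index facts
  have K1 : ∀ x ∈ l, 1 ≤ l.idxOf x → l.idxOf x < m → x ∉ l' := by
    intro x hx h1 h2 hx'
    rw [hl'] at hx'
    rcases mem_append.1 hx' with h | h
    · rcases List.mem_cons.1 (hPBsub h) with rfl | h'
      · rw [hb0] at h1; omega
      · exact hσ x h' hx
    · have := ((mem_drop_iff_indexOf hnd).1 h).2
      omega
  have K2 : ∀ x ∈ l, m ≤ l.idxOf x → x ∈ l' := by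
    intro x hx hm
    rw [hl']
    exact mem_append_right _ ((mem_drop_iff_indexOf hnd).2 ⟨hx, hm⟩)
  have K3 : ∀ x ∈ l, ∀ z ∈ l, m ≤ l.idxOf x → l.idxOf x < l.idxOf z →
      l'.idxOf x < l'.idxOf z := by
    intro x hx z hz hmx hxz
    have hmz : m ≤ l.idxOf z := by omega
    have hxd : x ∈ l.drop m := (mem_drop_iff_indexOf hnd).2 ⟨hx, hmx⟩
    have hzd : z ∈ l.drop m := (mem_drop_iff_indexOf hnd).2 ⟨hz, hmz⟩
    have hxPB : x ∉ PB.support := fun h => hdisj x h hxd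
    have hzPB : z ∉ PB.support := fun h => hdisj z h hzd
    rw [hl', idxOf_append_of_notMem hxPB, idxOf_append_of_notMem hzPB,
      indexOf_drop hnd hx hmx, indexOf_drop hnd hz hmz]
    omega
  have K4 : ∀ z ∈ l', z ≠ b → 0 < l'.idxOf z := by
    intro z hz hzb
    rcases Nat.eq_zero_or_pos (l'.idxOf z) with h | h
    · exact absurd ((idxOf_inj hz).1 (by rw [h, hb0'])) hzb
    · exact h
  have hlen_pos : 0 < l.length := length_pos_iff.2 (List.ne_nil_of_mem hbl)
  have hb_eq : l[0]'hlen_pos = b := by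
    rw [List.getElem_of_eq hhead]
    rfl
  -- climb from b to a low vertex
  have K5 : ∀ y ∈ l, 1 ≤ l.idxOf y → l.idxOf y < m →
      ∃ R, Chain (Step G l') b R ∧ (b :: R).getLast (by simp) = y ∧ cnt l' R = 0 := by
    intro y hy h1 h2
    have hylen : l.idxOf y < l.length := idxOf_lt_length_iff.2 hy
    obtain ⟨R, hRc, hRlast, hRmem⟩ := runup hlc (l.idxOf y) 0 (l.idxOf y) (by omega) hylen
    have hy_eq : l[l.idxOf y]'hylen = y := getElem_idxOf hylen
    have hmem' : ∀ x ∈ R, x ∉ l' := by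
      intro x hx
      obtain ⟨t, ht, ht1, ht2, rfl⟩ := hRmem x hx
      refine K1 _ (getElem_mem ht) ?_ ?_
      · rw [List.Nodup.idxOf_getElem hnd t ht]; omega
      · rw [List.Nodup.idxOf_getElem hnd t ht]; omega
    rw [hb_eq] at hRc
    refine ⟨R, step_chain_of_adj_chain R b hRc hmem', ?_, cnt_eq_zero_of hmem'⟩
    rw [← hy_eq, ← hRlast]
    exact getLast_cons_eq_of_eq hb_eq.symm R
  -- descend from z to y (both low)
  have K6 : ∀ y ∈ l, ∀ z ∈ l, 1 ≤ l.idxOf y → l.idxOf y < l.idxOf z → l.idxOf z < m →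
      ∃ R, Chain (Step G l') z R ∧ (z :: R).getLast (by simp) = y ∧ cnt l' R = 0 := by
    intro y hy z hz h1 h2 h3
    have hzlen : l.idxOf z < l.length := idxOf_lt_length_iff.2 hz
    obtain ⟨R, hRc, hRlast, hRmem⟩ := rundown hlc (l.idxOf z - l.idxOf y)
      (l.idxOf y) (l.idxOf z) (by omega) hzlen
    have hz_eq : l[l.idxOf z]'hzlen = z := getElem_idxOf hzlen
    have hy_eq : l[l.idxOf y]'(by omega) = y := getElem_idxOf (by omega)
    have hmem' : ∀ x ∈ R, x ∉ l' := by
      intro x hx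
      obtain ⟨t, ht, ht1, ht2, rfl⟩ := hRmem x hx
      refine K1 _ (getElem_mem ht) ?_ ?_
      · rw [List.Nodup.idxOf_getElem hnd t ht]; omega
      · rw [List.Nodup.idxOf_getElem hnd t ht]; omega
    rw [hz_eq] at hRc
    refine ⟨R, step_chain_of_adj_chain R z hRc hmem', ?_, cnt_eq_zero_of hmem'⟩
    rw [← hy_eq, ← hRlast]
    exact getLast_cons_eq_of_eq hz_eq.symm R
  -- transformation of the tail of the certificate
  have T : ∀ (δ₁ : List V) (x : V), Chain (Step G l) x δ₁ →
      (∃ δ₂, Chain (Step G l') x δ₂ ∧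
        (x :: δ₂).getLast (by simp) = (x :: δ₁).getLast (by simp) ∧ cnt l' δ₂ ≤ cnt l δ₁) ∨
      (∃ w δr, w ∈ b :: σ ∧ Chain (Step G l) w δr ∧
        (w :: δr).getLast (by simp) = (x :: δ₁).getLast (by simp) ∧ cnt l δr ≤ cnt l δ₁) := by
    intro δ₁
    induction δ₁ with
    | nil => intro x _; exact Or.inl ⟨[], Chain.nil, rfl, le_refl _⟩
    | cons y δ' ih =>
      intro x hchx
      rw [chain_cons'] at hchx
      obtain ⟨hstep, hchy⟩ := hchx
      have hgl : (y :: δ').getLast (by simp) = (x :: y :: δ').getLast (by simp) :=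
        List.getLast_cons_cons.symm
      by_cases hyσ : y ∈ b :: σ
      · exact Or.inr ⟨y, δ', hyσ, hchy, hgl, cnt_le_cons _ _ _⟩
      · have hcnty : cnt l (y :: δ') = cnt l [y] + cnt l δ' := by
          rw [← singleton_append, cnt_append]
        have hpiece : ∃ P, Chain (Step G l') x P ∧
            (x :: P).getLast (by simp) = y ∧ cnt l' P ≤ cnt l [y] := by
          rcases hstep with ⟨hadj, hyl⟩ | ⟨hyl, z, hzl, hxz, hlt⟩
          · have hy' : y ∉ l' := by
              rw [hl']
              intro hmem
              rcases mem_append.1 hmem with h | h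
              · exact hyσ (hPBsub h)
              · exact hyl (l.drop_subset m h)
            refine ⟨[y], Chain.cons (Or.inl ⟨hadj, hy'⟩) Chain.nil, by simp, ?_⟩
            rw [cnt_cons_not_mem hy', cnt_nil]
            exact Nat.zero_le _
          · have hyb : y ≠ b := fun h => hyσ (h ▸ mem_cons_self)
            have hy1 : 1 ≤ l.idxOf y := by
              rcases Nat.eq_zero_or_pos (l.idxOf y) with h | h
              · exact absurd ((idxOf_inj hyl).1 (by rw [h, hb0])) hyb
              · exact h
            have hcnty1 : cnt l [y] = 1 := by rw [cnt_cons_mem hyl, cnt_nil]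
            by_cases hzm : m ≤ l.idxOf z
            · have hz' : z ∈ l' := K2 z hzl hzm
              have hzb : z ≠ b := by
                intro h
                rw [h, hb0] at hzm
                omega
              by_cases hym : m ≤ l.idxOf y
              · refine ⟨[y], Chain.cons (Or.inr ⟨K2 y hyl hym, z, hz', hxz,
                  K3 y hyl z hzl hym hlt⟩) Chain.nil, by simp, ?_⟩
                rw [hcnty1]
                by_cases h : y ∈ l'
                · rw [cnt_cons_mem h, cnt_nil]
                · rw [cnt_cons_not_mem h, cnt_nil]
                  omega
              · push_neg at hym
                obtain ⟨R, hRch, hRlast, hRcnt⟩ := K5 y hyl hy1 hym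
                refine ⟨b :: R, Chain.cons (Or.inr ⟨hbl', z, hz', hxz, ?_⟩) hRch, ?_, ?_⟩
                · rw [hb0']
                  exact K4 z hz' hzb
                · exact List.getLast_cons_cons.trans hRlast
                · rw [cnt_cons_mem hbl', hRcnt, hcnty1]
            · push_neg at hzm
              have hz1 : 1 ≤ l.idxOf z := by omega
              have hz' : z ∉ l' := K1 z hzl hz1 hzm
              obtain ⟨R, hRch, hRlast, hRcnt⟩ := K6 y hyl z hzl hy1 hlt hzm
              refine ⟨z :: R, Chain.cons (Or.inl ⟨hxz, hz'⟩) hRch,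
                List.getLast_cons_cons.trans hRlast, ?_⟩
              rw [cnt_cons_not_mem hz', hRcnt, hcnty1]
              omega
        obtain ⟨P, hPch, hPlast, hPcnt⟩ := hpiece
        rcases ih y hchy with ⟨δ₂, h1, h2, h3⟩ | ⟨w, δr, h1, h2, h3, h4⟩
        · left
          refine ⟨P ++ δ₂, chain_append_of_getLast P x y δ₂ hPch hPlast h1, ?_, ?_⟩
          · exact ((getLast_cons_append_eq x y P δ₂ hPlast).trans h2).trans hgl
          · rw [cnt_append, hcnty]
            omega
        · right
          refine ⟨w, δr, h1, h2, h3.trans hgl, ?_⟩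
          rw [hcnty]
          omega
  -- an initial climb from b to y₀
  have hR₀ : ∃ R₀, Chain (Step G l') b R₀ ∧ (b :: R₀).getLast (by simp) = y₀ ∧
      cnt l' R₀ = 0 := by
    by_cases hy₀b : y₀ = b
    · exact ⟨[], Chain.nil, by simp [hy₀b], rfl⟩
    · have hy₀1 : 1 ≤ l.idxOf y₀ := by
        rcases Nat.eq_zero_or_pos (l.idxOf y₀) with h | h
        · exact absurd ((idxOf_inj hy₀l).1 (by rw [h, hb0])) hy₀b
        · exact h
      exact K5 y₀ hy₀l hy₀1 hlt₀
  obtain ⟨R₀, hR₀ch, hR₀last, hR₀cnt⟩ := hR₀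
  rcases T δ y₀ hchδ with ⟨δ₂, h1, h2, h3⟩ | ⟨w, δr, hw, h2, h3, h4⟩
  · refine ⟨α', R₀ ++ δ₂, hα'p, ha',
      chain_append_of_getLast R₀ b y₀ δ₂ hR₀ch hR₀last h1, ?_, ?_⟩
    · have heq : (b :: (R₀ ++ δ₂)).getLast (by simp) = (b :: L).getLast (by simp) := by
        rw [hLlast]
        exact (getLast_cons_append_eq b y₀ R₀ δ₂ hR₀last).trans h2
      rw [heq]
      exact hadj_end
    · show cnt l' (R₀ ++ δ₂) < cnt l L
      rw [cnt_append, hR₀cnt, hcntL]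
      omega
  · rcases List.mem_cons.1 hw with hwb | hwσ
    · have h2' : Chain (Step G l) b δr := hwb ▸ h2
      have h3' : (b :: δr).getLast (by simp) = (y₀ :: δ).getLast (by simp) :=
        (getLast_cons_eq_of_eq hwb.symm δr).trans h3
      refine ⟨α, δr, hα, ha, h2', ?_, ?_⟩
      · have heq : (b :: δr).getLast (by simp) = (b :: L).getLast (by simp) := by
          rw [hLlast]
          exact h3'
        rw [heq]
        exact hadj_end
      · show cnt l δr < cnt l L
        rw [hcntL]
        omega
    · obtain ⟨σ₁, σ₂, hsp⟩ := List.append_of_mem hwσ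
      rw [hsp] at hchσ
      obtain ⟨hchσ₁', _⟩ := chain_split'.1 hchσ
      have hgl₁ : (b :: (σ₁ ++ [w])).getLast (by simp) = w :=
        getLast_cons_append b σ₁ [w] (by simp)
      refine ⟨α, (σ₁ ++ [w]) ++ δr, hα, ha,
        chain_append_of_getLast (σ₁ ++ [w]) b w δr hchσ₁' hgl₁ h2, ?_, ?_⟩
      · have heq : (b :: ((σ₁ ++ [w]) ++ δr)).getLast (by simp) = (b :: L).getLast (by simp) := by
          rw [hLlast]
          exact (getLast_cons_append_eq b w (σ₁ ++ [w]) δr hgl₁).trans h3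
        rw [heq]
        exact hadj_end
      · have hcnt₁ : cnt l (σ₁ ++ [w]) = 0 := by
          refine cnt_eq_zero_of fun s hs => ?_
          rcases mem_append.1 hs with h | h
          · exact hσ s (by rw [hsp]; exact mem_append_left _ h)
          · simp only [List.mem_singleton] at h
            subst h
            exact hσ s hwσ
        show cnt l ((σ₁ ++ [w]) ++ δr) < cnt l L
        rw [cnt_append, hcnt₁, hcntL]
        omega

end Surgery

end AbcPathAux

/-- A graph contains an `a`–`b`–`c` path iff no single vertex other than `b`
separates `b` from `{a, c}`. -/
theorem abc_path_iff {V : Type*} (G : SimpleGraph V) (a b c : V)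
    (hab : a ≠ b) (hbc : b ≠ c) (hac : a ≠ c) :
    (∃ p : G.Walk a c, p.IsPath ∧ b ∈ p.support) ↔
      (∀ v : V, v ≠ b →
        (∃ p : G.Walk b a, p.IsPath ∧ v ∉ p.support) ∨
        (∃ p : G.Walk b c, p.IsPath ∧ v ∉ p.support)) := by
  classical
  constructor
  · rintro ⟨p, hp, hbp⟩ v hv
    have hq := hp.takeUntil hbp
    have hr := hp.dropUntil hbp
    have hspec := p.take_spec hbp
    have hnd : ((p.takeUntil b hbp).support ++ (p.dropUntil b hbp).support.tail).Nodup := by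
      have hnd0 := hp.support_nodup
      rw [← hspec, SimpleGraph.Walk.support_append] at hnd0
      exact hnd0
    by_cases hvq : v ∈ (p.takeUntil b hbp).support
    · right
      refine ⟨p.dropUntil b hbp, hr, fun hvr => ?_⟩
      have hrt : (p.dropUntil b hbp).support = b :: (p.dropUntil b hbp).support.tail :=
        (p.dropUntil b hbp).support_eq_cons
      rcases List.mem_cons.1 (hrt ▸ hvr) with h | h
      · exact hv h
      · rw [List.nodup_append] at hnd
        exact hnd.2.2 v hvq v h rfl
    · left
      refine ⟨(p.takeUntil b hbp).reverse, hq.reverse, fun h => ?_⟩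
      rw [SimpleGraph.Walk.support_reverse] at h
      exact hvq (List.mem_reverse.1 h)
  · intro hyp
    obtain ⟨α₀, hα₀, ha₀⟩ : ∃ α : G.Walk b c, α.IsPath ∧ a ∉ α.support := by
      rcases hyp a hab with ⟨P, _, haP⟩ | ⟨P, hP, haP⟩
      · exact absurd P.end_mem_support haP
      · exact ⟨P, hP, haP⟩
    have hex : ∃ k, ∃ (α : G.Walk b c) (L : List V), α.IsPath ∧ a ∉ α.support ∧
        List.Chain (AbcPathAux.Step G α.support) b L ∧
        G.Adj ((b :: L).getLast (by simp)) a ∧ AbcPathAux.cnt α.support L = k := by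
      obtain ⟨u, hu, hua⟩ := AbcPathAux.exists_cert_aux hab hbc hyp α₀ hα₀ ha₀
      obtain ⟨L, hL, hlast⟩ := AbcPathAux.exists_chain_of_rtg hu
      exact ⟨_, α₀, L, hα₀, ha₀, hL, by rw [hlast]; exact hua, rfl⟩
    obtain ⟨α, L, hα, ha, hch, hadj, hcnt⟩ := Nat.find_spec hex
    rcases Nat.eq_zero_or_pos (Nat.find hex) with hK | hK
    · apply AbcPathAux.extract hab α hα ha L hch hadj
      intro y hy
      exact AbcPathAux.cnt_eq_zero.1 (by rw [hcnt, hK]) y hy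
    · obtain ⟨α', L', hα', ha', hch', hadj', hlt⟩ :=
        AbcPathAux.surgery hab α hα ha L hch hadj (by rw [hcnt]; exact hK)
      exact absurd ⟨α', L', hα', ha', hch', hadj', rfl⟩
        (Nat.find_min hex (by rw [← hcnt]; exact hcnt ▸ hlt))
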